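/- Let n = 2 and α ≥ 1. There exists an allocation rule x ∈ T(σ) with cost approximation ratio R_C(ρ,x) ≤ α if and only if there is no α-cost conflict pair, i.e., if and only if f(1/ρ₂(s), 1/ρ₁(s′)) ≤ α for all profiles s ≺ s′. -/
import Mathlib


namespace Stmt17

variable {k : ℕ}

noncomputable def rho1 (v1 v2 : Fin k × Fin k → ℝ) (s : Fin k × Fin k) : ℝ :=
  v1 s / max (v1 s) (v2 s)

noncomputable def rho2 (v1 v2 : Fin k × Fin k → ℝ) (s : Fin k × Fin k) : ℝ :=
  v2 s / max (v1 s) (v2 s)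

/-- One step of the reachability relation. -/
def step (v1 v2 : Fin k × Fin k → ℝ) (p q : Fin k × Fin k) : Prop :=
  (p.2 = q.2 ∧ v1 p < v1 q) ∨ (p.1 = q.1 ∧ v2 q < v2 p)

/-- The conflict function `f`. -/
noncomputable def conflictF (u v : ℝ) : ℝ :=
  if u = 1 ∧ v = 1 then 1 else (u * v - 1) / (u + v - 2)

/-- Membership in the truthful polytope `T(σ)` (two agents). -/
def InT (v1 v2 x1 x2 : Fin k × Fin k → ℝ) : Prop :=
  (∀ s, 0 ≤ x1 s ∧ x1 s ≤ 1) ∧ (∀ s, 0 ≤ x2 s ∧ x2 s ≤ 1) ∧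
  (∀ s, x1 s + x2 s = 1) ∧
  (∀ a b c : Fin k, v1 (a, c) < v1 (b, c) → x1 (a, c) ≤ x1 (b, c)) ∧
  (∀ a c d : Fin k, v2 (a, c) < v2 (a, d) → x2 (a, c) ≤ x2 (a, d))

/-! ### Auxiliary definitions and lemmas -/

/-- The required lower bound on the allocation to agent 1 at profile `s`. -/
noncomputable def Lb (α : ℝ) (v1 v2 : Fin k × Fin k → ℝ) (s : Fin k × Fin k) : ℝ :=
  max 0 ((max (v1 s) (v2 s) / v2 s - α) / (max (v1 s) (v2 s) / v2 s - 1))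

open Classical in
/-- The allocation to agent 1: sup of lower bounds over reachability-predecessors. -/
noncomputable def X1 (α : ℝ) (v1 v2 : Fin k × Fin k → ℝ) (s : Fin k × Fin k) : ℝ :=
  (Finset.univ.filter (fun p => Relation.ReflTransGen (step v1 v2) p s)).sup'
    ⟨s, Finset.mem_filter.mpr ⟨Finset.mem_univ s, Relation.ReflTransGen.refl⟩⟩
    (Lb α v1 v2)

open Classical in
lemma Lb_le_X1 (α : ℝ) (v1 v2 : Fin k × Fin k → ℝ) {p s : Fin k × Fin k}
    (h : Relation.ReflTransGen (step v1 v2) p s) : Lb α v1 v2 p ≤ X1 α v1 v2 s := by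
  unfold X1
  apply Finset.le_sup'
  simp only [Finset.mem_filter, Finset.mem_univ, true_and]
  exact h

open Classical in
lemma X1_le (α : ℝ) (v1 v2 : Fin k × Fin k → ℝ) (s : Fin k × Fin k) {c : ℝ}
    (h : ∀ p, Relation.ReflTransGen (step v1 v2) p s → Lb α v1 v2 p ≤ c) :
    X1 α v1 v2 s ≤ c := by
  unfold X1
  exact Finset.sup'_le _ _ (fun p hp => h p (Finset.mem_filter.mp hp).2)

lemma X1_mono (α : ℝ) (v1 v2 : Fin k × Fin k → ℝ) {p q : Fin k × Fin k}
    (h : Relation.ReflTransGen (step v1 v2) p q) : X1 α v1 v2 p ≤ X1 α v1 v2 q :=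
  X1_le α v1 v2 p (fun r hr => Lb_le_X1 α v1 v2 (hr.trans h))

/-- Key arithmetic lemma for the forward direction. -/
lemma conflict_le (α u w t t' : ℝ) (hα : 1 ≤ α) (hu : 1 ≤ u) (hw : 1 ≤ w)
    (ht : 0 ≤ t) (ht1 : t ≤ 1) (ht' : 0 ≤ t') (ht'1 : t' ≤ 1) (htt : t ≤ t')
    (h1 : t + (1 - t) * u ≤ α) (h2 : t' * w + (1 - t') ≤ α) :
    conflictF u w ≤ α := by
  unfold conflictF
  split_ifs with h
  · linarith
  · have hsum : 0 < u + w - 2 := by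
      rcases eq_or_lt_of_le hu with h' | h'
      · rcases eq_or_lt_of_le hw with h'' | h''
        · exact absurd ⟨h'.symm, h''.symm⟩ h
        · linarith
      · linarith
    rw [div_le_iff₀ hsum]
    have h3 : (1 - t) * (u - 1) ≤ α - 1 := by nlinarith
    have h4 : t' * (w - 1) ≤ α - 1 := by nlinarith
    have h5 : (1 - t) * (u - 1) * (w - 1) ≤ (α - 1) * (w - 1) :=
      mul_le_mul_of_nonneg_right h3 (by linarith)
    have h6 : t * ((u - 1) * (w - 1)) ≤ t' * ((u - 1) * (w - 1)) :=
      mul_le_mul_of_nonneg_right htt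
        (mul_nonneg (by linarith) (by linarith))
    have h7 : t' * (w - 1) * (u - 1) ≤ (α - 1) * (u - 1) :=
      mul_le_mul_of_nonneg_right h4 (by linarith)
    nlinarith [h5, h6, h7]

/-- Arithmetic: the lower bound requirement guarantees the cost bound when `ρ₁ = 1`. -/
lemma lower_ok (α u t : ℝ) (hα : 1 ≤ α) (hu : 1 ≤ u) (h0 : 0 ≤ t)
    (hL : max 0 ((u - α) / (u - 1)) ≤ t) : t + (1 - t) * u ≤ α := by
  rcases eq_or_lt_of_le hu with h | h
  · rw [← h]; linarith
  · have h2 : (u - α) / (u - 1) ≤ t := le_trans (le_max_right 0 _) hL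
    rw [div_le_iff₀ (by linarith : (0:ℝ) < u - 1)] at h2
    nlinarith

/-- Arithmetic: the upper bound requirement guarantees the cost bound when `ρ₂ = 1`. -/
lemma upper_ok (α w t : ℝ) (h0 : 0 ≤ t) (hw : 1 < w) (ht : t ≤ (α - 1) / (w - 1)) :
    t * w + (1 - t) ≤ α := by
  rw [le_div_iff₀ (by linarith : (0:ℝ) < w - 1)] at ht
  nlinarith

/-- Arithmetic: no conflict implies the lower bound at `p` is below the upper bound at `s`. -/
lemma conflict_to_bound (α u w : ℝ) (hα : 1 ≤ α) (hu : 1 ≤ u) (hw : 1 < w)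
    (hcf : conflictF u w ≤ α) : max 0 ((u - α) / (u - 1)) ≤ (α - 1) / (w - 1) := by
  apply max_le (div_nonneg (by linarith) (by linarith))
  rcases eq_or_lt_of_le hu with h | h
  · rw [← h, sub_self, div_zero]
    exact div_nonneg (by linarith) (by linarith)
  · unfold conflictF at hcf
    rw [if_neg (by rintro ⟨h1, _⟩; rw [h1] at h; exact lt_irrefl 1 h),
      div_le_iff₀ (by linarith : (0:ℝ) < u + w - 2)] at hcf
    rw [div_le_div_iff₀ (by linarith : (0:ℝ) < u - 1) (by linarith : (0:ℝ) < w - 1)]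
    nlinarith

/-- with `n = 2`, a truthful allocation rule of cost approximation ratio
at most `α` exists iff there is no `α`-cost conflict pair. -/
theorem stmt17 (k : ℕ) [NeZero k] (α : ℝ) (hα : 1 ≤ α)
    (v1 v2 : Fin k × Fin k → ℝ)
    (hv1 : ∀ s, 0 < v1 s) (hv2 : ∀ s, 0 < v2 s) :
    (∃ x1 x2 : Fin k × Fin k → ℝ, InT v1 v2 x1 x2 ∧
      Finset.univ.sup' Finset.univ_nonempty
        (fun s : Fin k × Fin k =>
          x1 s / rho1 v1 v2 s + x2 s / rho2 v1 v2 s) ≤ α) ↔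
    (∀ s s', Relation.TransGen (step v1 v2) s s' →
      conflictF (1 / rho2 v1 v2 s) (1 / rho1 v1 v2 s') ≤ α) := by
  have hr1 : ∀ s, 1 / rho1 v1 v2 s = max (v1 s) (v2 s) / v1 s := by
    intro s; unfold rho1; rw [one_div_div]
  have hr2 : ∀ s, 1 / rho2 v1 v2 s = max (v1 s) (v2 s) / v2 s := by
    intro s; unfold rho2; rw [one_div_div]
  have hdiv1 : ∀ (x : ℝ) (s), x / rho1 v1 v2 s = x * (max (v1 s) (v2 s) / v1 s) := by
    intro x s; unfold rho1; rw [div_div_eq_mul_div, mul_div_assoc]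
  have hdiv2 : ∀ (x : ℝ) (s), x / rho2 v1 v2 s = x * (max (v1 s) (v2 s) / v2 s) := by
    intro x s; unfold rho2; rw [div_div_eq_mul_div, mul_div_assoc]
  have hu1 : ∀ s, 1 ≤ max (v1 s) (v2 s) / v2 s := fun s =>
    (one_le_div (hv2 s)).mpr (le_max_right _ _)
  have hw1 : ∀ s, 1 ≤ max (v1 s) (v2 s) / v1 s := fun s =>
    (one_le_div (hv1 s)).mpr (le_max_left _ _)
  have hone : ∀ s, max (v1 s) (v2 s) / v1 s = 1 ∨ max (v1 s) (v2 s) / v2 s = 1 := by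
    intro s
    rcases max_choice (v1 s) (v2 s) with h | h
    · exact Or.inl (by rw [h, div_self (hv1 s).ne'])
    · exact Or.inr (by rw [h, div_self (hv2 s).ne'])
  have hX0 : ∀ s, (0:ℝ) ≤ X1 α v1 v2 s := fun s =>
    le_trans (le_max_left 0 _) (Lb_le_X1 α v1 v2 Relation.ReflTransGen.refl)
  have hX1' : ∀ s, X1 α v1 v2 s ≤ 1 := by
    intro s
    apply X1_le
    intro p _
    unfold Lb
    apply max_le zero_le_one
    rcases eq_or_lt_of_le (hu1 p) with h | h
    · rw [← h, sub_self, div_zero]; exact zero_le_one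
    · rw [div_le_one (by linarith)]; linarith
  constructor
  · -- forward direction
    rintro ⟨x1, x2, ⟨hx1, hx2, hsum, hmono1, hmono2⟩, hcost⟩ s s' hss'
    have hx2eq : ∀ s, x2 s = 1 - x1 s := fun s => by linarith [hsum s]
    have hstep : ∀ p q, step v1 v2 p q → x1 p ≤ x1 q := by
      rintro ⟨a, b⟩ ⟨c, d⟩ (⟨h2, hlt⟩ | ⟨h1, hlt⟩)
      · simp only at h2; subst h2
        exact hmono1 a c b hlt
      · simp only at h1; subst h1
        have := hmono2 a d b hlt
        rw [hx2eq, hx2eq] at this; linarith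
    have htt : x1 s ≤ x1 s' := by
      induction hss' with
      | single h => exact hstep _ _ h
      | tail _ h ih => exact le_trans ih (hstep _ _ h)
    have hc : ∀ t, x1 t / rho1 v1 v2 t + x2 t / rho2 v1 v2 t ≤ α := fun t =>
      le_trans (Finset.le_sup' (fun s : Fin k × Fin k =>
        x1 s / rho1 v1 v2 s + x2 s / rho2 v1 v2 s) (Finset.mem_univ t)) hcost
    have hcs := hc s
    have hcs' := hc s'
    rw [hdiv1, hdiv2, hx2eq] at hcs hcs'
    rw [hr2 s, hr1 s']
    apply conflict_le α _ _ (x1 s) (x1 s') hα (hu1 s) (hw1 s')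
      (hx1 s).1 (hx1 s).2 (hx1 s').1 (hx1 s').2 htt
    · have : x1 s * 1 ≤ x1 s * (max (v1 s) (v2 s) / v1 s) :=
        mul_le_mul_of_nonneg_left (hw1 s) (hx1 s).1
      linarith
    · have : (1 - x1 s') * 1 ≤ (1 - x1 s') * (max (v1 s') (v2 s') / v2 s') :=
        mul_le_mul_of_nonneg_left (hu1 s') (by linarith [(hx1 s').2])
      linarith
  · -- backward direction
    intro hconf
    refine ⟨X1 α v1 v2, fun s => 1 - X1 α v1 v2 s, ⟨?_, ?_, ?_, ?_, ?_⟩, ?_⟩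
    · exact fun s => ⟨hX0 s, hX1' s⟩
    · intro s
      dsimp only
      exact ⟨by linarith [hX1' s], by linarith [hX0 s]⟩
    · intro s; dsimp only; ring
    · intro a b c hlt
      exact X1_mono α v1 v2 (Relation.ReflTransGen.single (Or.inl ⟨rfl, hlt⟩))
    · intro a c d hlt
      have : X1 α v1 v2 (a, d) ≤ X1 α v1 v2 (a, c) :=
        X1_mono α v1 v2 (Relation.ReflTransGen.single (Or.inr ⟨rfl, hlt⟩))
      dsimp only
      linarith
    · apply Finset.sup'_le
      intro s _
      dsimp only
      rw [hdiv1, hdiv2]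
      rcases hone s with hws | hus
      · -- ρ₁(s) = 1 : cost = t + (1-t) * u
        rw [hws, mul_one]
        exact lower_ok α _ _ hα (hu1 s) (hX0 s)
          (Lb_le_X1 α v1 v2 Relation.ReflTransGen.refl)
      · -- ρ₂(s) = 1 : cost = t * w + (1-t)
        rw [hus, mul_one]
        rcases eq_or_lt_of_le (hw1 s) with h | h
        · rw [← h, mul_one]; linarith [hX0 s, hX1' s]
        · apply upper_ok α _ _ (hX0 s) h
          apply X1_le
          intro p hp
          rcases Relation.reflTransGen_iff_eq_or_transGen.mp hp with rfl | htg
          · unfold Lb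
            rw [hus, sub_self, div_zero, max_self]
            exact div_nonneg (by linarith) (by linarith)
          · have hcf := hconf p s htg
            rw [hr2 p, hr1 s] at hcf
            exact conflict_to_bound α _ _ hα (hu1 p) h hcf

end Stmt17
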